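/- Let X be a bounded metric space and C_X = {X_i}_{i∈I} a covering of X by nonempty subsets such that δ_X := diam X − sup_i diam X_i > 0. Set ε = δ_X/5. Then every bounded metric space Y with d_GH(X,Y) < ε admits a covering C_Y = {Y_i}_{i∈I} by nonempty subsets, indexed by the same set I, with diam Y − sup_i diam Y_i > ε. -/

import Mathlib

open Metric Set
open scoped ENNReal

/-- A correspondence between `X` and `Y`: a relation whose projections are surjective. -/
def IsCorrespondence {X Y : Type*} (R : Set (X × Y)) : Prop :=
  (∀ x : X, ∃ y : Y, (x, y) ∈ R) ∧ (∀ y : Y, ∃ x : X, (x, y) ∈ R)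

/-- The distortion of a relation `R ⊆ X × Y`. -/
noncomputable def corrDistortion {X Y : Type*} [MetricSpace X] [MetricSpace Y]
    (R : Set (X × Y)) : ℝ≥0∞ :=
  ⨆ p ∈ R, ⨆ q ∈ R, ENNReal.ofReal |dist p.1 q.1 - dist p.2 q.2|

/-- The Gromov–Hausdorff distance between (arbitrary) metric spaces:
half the infimum of distortions of correspondences. -/
noncomputable def ghDist (X Y : Type*) [MetricSpace X] [MetricSpace Y] : ℝ≥0∞ :=
  (⨅ (R : Set (X × Y)) (_ : IsCorrespondence R), corrDistortion R) / 2

/-- a covering witnessing `diam X − sup diam X_i = δ_X > 0` transfers to any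
bounded `Y` with `d_GH(X,Y) < δ_X/5`, giving a covering with `diam Y − sup diam Y_i > δ_X/5`. -/
theorem stmt6 {X : Type*} [MetricSpace X] [Nonempty X]
    (hXb : EMetric.diam (Set.univ : Set X) ≠ ⊤)
    {I : Type*} (C : I → Set X)
    (hCne : ∀ i, (C i).Nonempty) (hCcov : ⋃ i, C i = Set.univ)
    (δ : ℝ) (hδ : δ = Metric.diam (Set.univ : Set X) - ⨆ i, Metric.diam (C i))
    (hδpos : 0 < δ)
    (Y : Type*) [MetricSpace Y] [Nonempty Y]
    (hYb : EMetric.diam (Set.univ : Set Y) ≠ ⊤)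
    (hd : ghDist X Y < ENNReal.ofReal (δ / 5)) :
    ∃ D : I → Set Y, (∀ i, (D i).Nonempty) ∧ (⋃ i, D i = Set.univ) ∧
      δ / 5 < Metric.diam (Set.univ : Set Y) - ⨆ i, Metric.diam (D i) := by
  -- I is nonempty
  obtain ⟨x0⟩ := ‹Nonempty X›
  have hx0 : x0 ∈ ⋃ i, C i := by rw [hCcov]; trivial
  obtain ⟨i0, hi0⟩ := Set.mem_iUnion.1 hx0
  have hIne : Nonempty I := ⟨i0⟩
  -- extract a correspondence with small distortion
  have hd' : (⨅ (R : Set (X × Y)) (_ : IsCorrespondence R), corrDistortion R)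
      < ENNReal.ofReal (δ / 5) * 2 := by
    rw [← ENNReal.div_lt_iff (Or.inl two_ne_zero) (Or.inl ENNReal.ofNat_ne_top)]
    exact hd
  obtain ⟨R, hR2⟩ := iInf_lt_iff.1 hd'
  obtain ⟨hR, hRlt⟩ := iInf_lt_iff.1 hR2
  have hRlt' : corrDistortion R < ENNReal.ofReal (2 * (δ / 5)) := by
    have he : ENNReal.ofReal (δ / 5) * 2 = ENNReal.ofReal (2 * (δ / 5)) := by
      rw [ENNReal.ofReal_mul (by norm_num : (0:ℝ) ≤ 2), ENNReal.ofReal_ofNat, mul_comm]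
    rwa [he] at hRlt
  set r : ℝ := (corrDistortion R).toReal with hr
  have hrlt : r < 2 * (δ / 5) :=
    (ENNReal.lt_ofReal_iff_toReal_lt hRlt'.ne_top).1 hRlt'
  have key : ∀ p ∈ R, ∀ q ∈ R, |dist p.1 q.1 - dist p.2 q.2| ≤ r := by
    intro p hp q hq
    have h1 : ENNReal.ofReal |dist p.1 q.1 - dist p.2 q.2| ≤ corrDistortion R := by
      unfold corrDistortion
      exact le_iSup_of_le p (le_iSup_of_le hp (le_iSup_of_le q (le_iSup_of_le hq le_rfl)))
    have := ENNReal.toReal_mono hRlt'.ne_top h1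
    rwa [ENNReal.toReal_ofReal (abs_nonneg _)] at this
  have hr0 : 0 ≤ r := ENNReal.toReal_nonneg
  -- boundedness
  have hXbd : Bornology.IsBounded (Set.univ : Set X) :=
    Metric.isBounded_iff_ediam_ne_top.2 hXb
  have hYbd : Bornology.IsBounded (Set.univ : Set Y) :=
    Metric.isBounded_iff_ediam_ne_top.2 hYb
  -- the transferred covering
  set D : I → Set Y := fun i => {y | ∃ x ∈ C i, (x, y) ∈ R} with hD
  have hDne : ∀ i, (D i).Nonempty := by
    intro i
    obtain ⟨x, hx⟩ := hCne i
    obtain ⟨y, hy⟩ := hR.1 x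
    exact ⟨y, x, hx, hy⟩
  have hDcov : ⋃ i, D i = Set.univ := by
    ext y
    simp only [Set.mem_iUnion, Set.mem_univ, iff_true]
    obtain ⟨x, hx⟩ := hR.2 y
    have : x ∈ ⋃ i, C i := by rw [hCcov]; trivial
    obtain ⟨i, hi⟩ := Set.mem_iUnion.1 this
    exact ⟨i, x, hi, hx⟩
  -- diam Y ≥ diam X - r
  have hYX : Metric.diam (Set.univ : Set X) ≤ Metric.diam (Set.univ : Set Y) + r := by
    apply Metric.diam_le_of_forall_dist_le (by positivity)
    intro x _ x' _
    obtain ⟨y, hy⟩ := hR.1 x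
    obtain ⟨y', hy'⟩ := hR.1 x'
    have h1 := key (x, y) hy (x', y') hy'
    have h2 : dist y y' ≤ Metric.diam (Set.univ : Set Y) :=
      Metric.dist_le_diam_of_mem hYbd trivial trivial
    have := abs_le.1 h1
    simp only at this
    linarith [this.2]
  -- diam (D i) ≤ diam (C i) + r
  have hDdiam : ∀ i, Metric.diam (D i) ≤ Metric.diam (C i) + r := by
    intro i
    apply Metric.diam_le_of_forall_dist_le (by positivity)
    rintro y ⟨x, hx, hxy⟩ y' ⟨x', hx', hxy'⟩
    have h1 := key (x, y) hxy (x', y') hxy'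
    have h2 : dist x x' ≤ Metric.diam (C i) :=
      Metric.dist_le_diam_of_mem (hXbd.subset (Set.subset_univ _)) hx hx'
    have := abs_le.1 h1
    simp only at this
    linarith [this.1]
  -- sup bounds
  have hCbdd : BddAbove (Set.range fun i => Metric.diam (C i)) := by
    refine ⟨Metric.diam (Set.univ : Set X), ?_⟩
    rintro _ ⟨i, rfl⟩
    exact Metric.diam_mono (Set.subset_univ _) hXbd
  have hsupD : (⨆ i, Metric.diam (D i)) ≤ (⨆ i, Metric.diam (C i)) + r := by
    apply ciSup_le
    intro i
    exact le_trans (hDdiam i) (add_le_add_left (le_ciSup hCbdd i) r)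
  refine ⟨D, hDne, hDcov, ?_⟩
  linarith [hsupD, hYX, hrlt]
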